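/- Let 0 < η < π/3, a = e^{-iη}/(2cos η), c = 1/(1-|a|⁴), z_k = ca^{k+1}, w_k = 1-c|a|²a^k, b₀ = a+c|a|⁴. Then for every integer n ≥ 0, the counterclockwise angle ∠b₀z₀z₁ = ∠z_n z_{n+1} z_{n+2} = ∠w_n w_{n+1} w_{n+2} = π - η; equivalently, (z₁-z₀)/(b₀-z₀) = -a/|a|⁴ and (z_{n+2}-z_{n+1})/(z_n-z_{n+1}) = (w_{n+2}-w_{n+1})/(w_n-w_{n+1}) = -a. -/

import Mathlib

open Real Set

theorem stmt18 (η : ℝ) (hη0 : 0 < η) (hη1 : η < π / 3)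
    (a : ℂ) (ha : a = Complex.exp (-(η : ℂ) * Complex.I) / (2 * Real.cos η))
    (c : ℝ) (hc : c = 1 / (1 - ‖a‖ ^ 4))
    (z w : ℕ → ℂ) (hz : ∀ k, z k = (c : ℂ) * a ^ (k + 1))
    (hw : ∀ k, w k = 1 - (c : ℂ) * (‖a‖ : ℂ) ^ 2 * a ^ k)
    (b₀ : ℂ) (hb₀ : b₀ = a + (c : ℂ) * (‖a‖ : ℂ) ^ 4) :
    (z 1 - z 0) / (b₀ - z 0) = -a / (‖a‖ : ℂ) ^ 4 ∧
    (∀ n : ℕ, (z (n + 2) - z (n + 1)) / (z n - z (n + 1)) = -a ∧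
      (w (n + 2) - w (n + 1)) / (w n - w (n + 1)) = -a) ∧
    Complex.arg ((z 1 - z 0) / (b₀ - z 0)) = π - η ∧
    (∀ n : ℕ, Complex.arg ((z (n + 2) - z (n + 1)) / (z n - z (n + 1))) = π - η ∧
      Complex.arg ((w (n + 2) - w (n + 1)) / (w n - w (n + 1))) = π - η) := by
  have hπ := Real.pi_pos
  have hηhalf : η < π / 2 := by linarith
  have hcos : 0 < Real.cos η := Real.cos_pos_of_mem_Ioo ⟨by linarith, hηhalf⟩
  have hcoshalf : (1 : ℝ) / 2 < Real.cos η := by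
    have := Real.cos_lt_cos_of_nonneg_of_le_pi (le_of_lt hη0) (by linarith) hη1
    rw [Real.cos_pi_div_three] at this
    linarith
  have hexp : Complex.exp (-(η : ℂ) * Complex.I)
      = (Real.cos η : ℂ) - (Real.sin η : ℂ) * Complex.I := by
    rw [show -(η : ℂ) * Complex.I = (-(η : ℂ)) * Complex.I from rfl, Complex.exp_mul_I,
      Complex.cos_neg, Complex.sin_neg, ← Complex.ofReal_cos, ← Complex.ofReal_sin]
    ring
  have h2c : ((2 : ℂ) * Real.cos η) ≠ 0 := by
    have : (Real.cos η : ℂ) ≠ 0 := by exact_mod_cast ne_of_gt hcos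
    simpa using this
  have habs : ‖a‖ = 1 / (2 * Real.cos η) := by
    rw [ha, norm_div, Complex.norm_exp]
    have h1 : (-(η : ℂ) * Complex.I).re = 0 := by simp
    rw [h1, Real.exp_zero,
      show ((2 : ℂ) * Real.cos η) = ((2 * Real.cos η : ℝ) : ℂ) by push_cast; ring,
      Complex.norm_real, Real.norm_eq_abs, abs_of_pos (by linarith)]
  have habspos : 0 < ‖a‖ := by rw [habs]; positivity
  have ha0 : a ≠ 0 := by
    intro h
    rw [h] at habspos
    simp at habspos
  have habs1 : ‖a‖ < 1 := by
    rw [habs, div_lt_one (by linarith)]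
    linarith
  have h4lt : ‖a‖ ^ 4 < 1 :=
    pow_lt_one₀ (le_of_lt habspos) habs1 (by norm_num)
  have hne4 : (1 : ℝ) - ‖a‖ ^ 4 ≠ 0 := ne_of_gt (by linarith)
  have hccR : c * (1 - ‖a‖ ^ 4) = 1 := by
    rw [hc, one_div, inv_mul_cancel₀ hne4]
  have hcc : (c : ℂ) * (1 - ((‖a‖ : ℝ) : ℂ) ^ 4) = 1 := by
    exact_mod_cast congrArg (Complex.ofReal) hccR
  have hC0 : (c : ℂ) ≠ 0 := by
    intro h
    rw [h, zero_mul] at hcc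
    exact zero_ne_one hcc
  have hB0 : ((‖a‖ : ℝ) : ℂ) ≠ 0 := by
    exact_mod_cast ne_of_gt habspos
  have hB4 : ((‖a‖ : ℝ) : ℂ) ^ 4 ≠ 0 := pow_ne_zero _ hB0
  -- conjugate and key identity
  have ha' : a = ((Real.cos η : ℂ) - (Real.sin η : ℂ) * Complex.I) / (2 * Real.cos η) := by
    rw [ha, hexp]
  have hsum : a + (starRingEnd ℂ) a = 1 := by
    rw [ha']
    simp only [map_div₀, map_sub, map_mul, Complex.conj_ofReal, Complex.conj_I, map_ofNat]
    rw [← add_div,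
      show ((Real.cos η : ℂ) - (Real.sin η : ℂ) * Complex.I)
          + ((Real.cos η : ℂ) - (Real.sin η : ℂ) * -Complex.I) = 2 * (Real.cos η : ℂ) by ring]
    exact div_self h2c
  have hconj' : (starRingEnd ℂ) a = 1 - a := by linear_combination hsum
  have hkey : a * (1 - a) = ((‖a‖ : ℝ) : ℂ) ^ 2 := by
    rw [← hconj', Complex.mul_conj, ← Complex.sq_norm]
    push_cast
    ring
  have h1a : (1 : ℂ) - a ≠ 0 := by
    intro h
    rw [h, mul_zero] at hkey
    exact (pow_ne_zero 2 hB0) hkey.symm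
  -- part 1
  have hbz : b₀ - z 0 = (c : ℂ) * ((‖a‖ : ℝ) : ℂ) ^ 4 * (1 - a) := by
    rw [hb₀, hz]
    linear_combination (-a) * hcc
  have hbzne : b₀ - z 0 ≠ 0 := by
    rw [hbz]
    exact mul_ne_zero (mul_ne_zero hC0 hB4) h1a
  have hfirst : (z 1 - z 0) / (b₀ - z 0) = -a / ((‖a‖ : ℝ) : ℂ) ^ 4 := by
    rw [div_eq_div_iff hbzne hB4, hz, hz, hb₀]
    linear_combination (-a ^ 2) * hcc
  -- z ratios
  have hz1 : ∀ n : ℕ, (z (n + 2) - z (n + 1)) / (z n - z (n + 1)) = -a := by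
    intro n
    have hd : z n - z (n + 1) = (c : ℂ) * a ^ (n + 1) * (1 - a) := by
      rw [hz, hz]; ring
    rw [div_eq_iff (by rw [hd]; exact mul_ne_zero (mul_ne_zero hC0 (pow_ne_zero _ ha0)) h1a),
      hz, hz, hz]
    ring
  -- w ratios
  have hw1 : ∀ n : ℕ, (w (n + 2) - w (n + 1)) / (w n - w (n + 1)) = -a := by
    intro n
    have hd : w n - w (n + 1)
        = -((c : ℂ) * ((‖a‖ : ℝ) : ℂ) ^ 2 * a ^ n * (1 - a)) := by
      rw [hw, hw]; ring
    rw [div_eq_iff (by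
        rw [hd]
        exact neg_ne_zero.mpr (mul_ne_zero (mul_ne_zero (mul_ne_zero hC0 (pow_ne_zero _ hB0))
          (pow_ne_zero _ ha0)) h1a)),
      hw, hw, hw]
    ring
  -- arg of -a
  have harg : Complex.arg (-a) = π - η := by
    have h1 : -a = ((1 / (2 * Real.cos η) : ℝ) : ℂ)
        * ((Real.cos (π - η) : ℂ) + (Real.sin (π - η) : ℂ) * Complex.I) := by
      rw [ha, hexp, Real.cos_pi_sub, Real.sin_pi_sub]
      push_cast
      field_simp
      ring
    rw [h1, Complex.arg_real_mul _ (by positivity), Complex.ofReal_cos, Complex.ofReal_sin,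
      Complex.arg_cos_add_sin_mul_I ⟨by linarith, by linarith⟩]
  have hargdiv : Complex.arg (-a / ((‖a‖ : ℝ) : ℂ) ^ 4) = π - η := by
    have h5 : -a / ((‖a‖ : ℝ) : ℂ) ^ 4
        = (((‖a‖ ^ 4)⁻¹ : ℝ) : ℂ) * (-a) := by
      push_cast
      ring
    rw [h5, Complex.arg_real_mul _ (inv_pos.mpr (pow_pos habspos 4)), harg]
  refine ⟨hfirst, fun n => ⟨hz1 n, hw1 n⟩, ?_, fun n => ⟨?_, ?_⟩⟩
  · rw [hfirst]; exact hargdiv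
  · rw [hz1 n]; exact harg
  · rw [hw1 n]; exact harg
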